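/- arXiv:1601.06383 — 2 statements merged into one kernel-verified Lean document; each statement's English description precedes it below -/
import Mathlib

section
/- Let K ≥ 3 and t = KM/N with N = 2. For any reals x_0, ..., x_K ≥ 0 satisfying x_0 + x_1 + ... + x_K = 2 and ∑_{i=1}^{K} i·x_i = KM, and any integer q ∈ [1, K], the quantity n = ∑_{i=0}^{K} [(K-i)(2K-i-2)/(2K(K-1))]·x_i satisfies n ≥ (2K² - 2K - q² + q)/(K(K-1)) + M·(2q - 3K + 1)/(2(K-1)). -/
/-- LP outer bound for the worst-case load under uncoded placement with `N = 2`
files and `K` users. -/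
theorem lp_outer_bound (K : ℕ) (hK : 3 ≤ K) (x : ℕ → ℝ) (M : ℝ)
    (hx : ∀ i, 0 ≤ x i)
    (hfile : ∑ i ∈ Finset.range (K + 1), x i = 2)
    (hcache : ∑ i ∈ Finset.range (K + 1), (i : ℝ) * x i = K * M)
    (q : ℕ) (hq1 : 1 ≤ q) (hqK : q ≤ K) :
    ∑ i ∈ Finset.range (K + 1),
        (((K : ℝ) - i) * (2 * K - i - 2) / (2 * K * ((K : ℝ) - 1))) * x i
      ≥ (2 * (K : ℝ)^2 - 2 * K - (q : ℝ)^2 + q) / ((K : ℝ) * ((K : ℝ) - 1))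
        + M * (2 * (q : ℝ) - 3 * K + 1) / (2 * ((K : ℝ) - 1)) := by
  have hK1 : (1:ℝ) < K := by
    have : (3:ℝ) ≤ K := by exact_mod_cast hK
    linarith
  have hK0 : (0:ℝ) < K := by linarith
  have hKm1 : (0:ℝ) < (K:ℝ) - 1 := by linarith
  have hD : (0:ℝ) < 2 * K * ((K:ℝ) - 1) := by positivity
  have hc : ∀ i : ℕ, 0 ≤ (((i:ℝ) - q) * ((i:ℝ) - q + 1)) := by
    intro i
    rcases le_or_gt q i with h | h
    · have : (q:ℝ) ≤ i := by exact_mod_cast h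
      nlinarith
    · have : (i:ℝ) + 1 ≤ q := by exact_mod_cast h
      nlinarith
  have hsum : 0 ≤ ∑ i ∈ Finset.range (K+1),
      ((((i:ℝ) - q) * ((i:ℝ) - q + 1)) / (2 * K * ((K:ℝ)-1))) * x i := by
    apply Finset.sum_nonneg
    intro i _
    exact mul_nonneg (div_nonneg (hc i) (le_of_lt hD)) (hx i)
  have hexpand : ∑ i ∈ Finset.range (K + 1),
        (((K : ℝ) - i) * (2 * K - i - 2) / (2 * K * ((K : ℝ) - 1))) * x i
      = ∑ i ∈ Finset.range (K+1),
          ((((i:ℝ) - q) * ((i:ℝ) - q + 1)) / (2 * K * ((K:ℝ)-1))) * x i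
        + ((2*(K:ℝ)^2 - 2*K - (q:ℝ)^2 + q)/(2*K*((K:ℝ)-1))) *
            (∑ i ∈ Finset.range (K+1), x i)
        + ((2*(q:ℝ) - 3*K + 1)/(2*K*((K:ℝ)-1))) *
            (∑ i ∈ Finset.range (K+1), (i:ℝ) * x i) := by
    rw [Finset.mul_sum, Finset.mul_sum, ← Finset.sum_add_distrib, ← Finset.sum_add_distrib]
    apply Finset.sum_congr rfl
    intro i _
    field_simp
    ring
  rw [hexpand, hfile, hcache]
  have hrhs : ((2*(K:ℝ)^2 - 2*K - (q:ℝ)^2 + q)/(2*K*((K:ℝ)-1))) * 2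
        + ((2*(q:ℝ) - 3*K + 1)/(2*K*((K:ℝ)-1))) * (K*M)
      = (2 * (K : ℝ)^2 - 2 * K - (q : ℝ)^2 + q) / ((K : ℝ) * ((K : ℝ) - 1))
        + M * (2 * (q : ℝ) - 3 * K + 1) / (2 * ((K : ℝ) - 1)) := by
    field_simp
  linarith
end

section
/- For integers K ≥ 2 and 0 ≤ t ≤ K, with N = 2 and M = 2t/K, the achievable load R_co(M) = N - M - M(N-1)K(N-M)/(N²(K-1)) equals 2(K-t)/K - t(K-t)/(K(K-1)), which matches the outer bound at the corner point; hence the proposed scheme is optimal under uncoded placement for N = 2. -/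
/-- At the corner point `M = 2t/K` (with `N = 2`), the achievable load `R_co(M)`
equals the outer-bound value `2(K-t)/K - t(K-t)/(K(K-1))`. -/
theorem Rco_matches_outer_bound (K t : ℕ) (hK : 2 < K) (ht : t ≤ K) :
    (2 : ℝ) - (2 * (t : ℝ) / K)
        - (2 * (t : ℝ) / K) * ((2 : ℝ) - 1) * K * ((2 : ℝ) - 2 * (t : ℝ) / K)
          / ((2 : ℝ)^2 * ((K : ℝ) - 1))
      = 2 * ((K : ℝ) - t) / K - (t : ℝ) * ((K : ℝ) - t) / ((K : ℝ) * ((K : ℝ) - 1)) := by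
  have hK0 : (K : ℝ) ≠ 0 := by positivity
  have hK1 : (K : ℝ) - 1 ≠ 0 := by
    have : (2 : ℝ) < K := by exact_mod_cast hK
    nlinarith
  field_simp
  ring
end
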